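/- Let S be a partially ordered set containing the three-element chain Q = {0 < 1 < 2} as a full subposet, and let R = S − {1}. Assume 0 is the greatest element of {r ∈ R : r ≤ 1} and 2 is the least element of {r ∈ R : r ≥ 1}. Then the inclusion of simplicial sets N(Q) ∪ N(R) ⊆ N(S) is inner anodyne. -/

import Mathlib

open CategoryTheory

local notation "Δ[" n "]" => SSet.stdSimplex.obj (SimplexCategory.mk n)
local notation "Λ[" n ", " i "]" => SSet.horn n i

/-- The union of the nerves of a family of full subposets, as a subcomplex of the
nerve of a poset `S`: an `n`-simplex belongs to it iff all its vertices lie in some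
member of the family. -/
def nerveUnion (S : Type*) [PartialOrder S] (Qs : Set (Set S)) :
    Subfunctor (nerve S) where
  obj _ := {σ | ∃ T ∈ Qs, ∀ i, σ.obj i ∈ T}
  map f := by
    rintro σ ⟨T, hT, h⟩
    exact ⟨T, hT, fun i => h _⟩

/-- The class of inner horn inclusions `Λ[n, i] ⟶ Δ[n]`, `0 < i < n`, up to isomorphism
in the arrow category. -/
def InnerHornInclusions : MorphismProperty SSet := fun _ _ f =>
  ∃ (n : ℕ) (i : Fin (n + 1)), 0 < (i : ℕ) ∧ (i : ℕ) < n ∧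
    Nonempty (Arrow.mk f ≅ Arrow.mk ((SSet.horn n i).ι))

/-- The right lifting property against a class of morphisms. -/
def RLP (T : MorphismProperty SSet) : MorphismProperty SSet := fun _ _ p =>
  ∀ ⦃A B : SSet⦄ (i : A ⟶ B), T i → HasLiftingProperty i p

/-- The left lifting property against a class of morphisms. -/
def LLP (T : MorphismProperty SSet) : MorphismProperty SSet := fun _ _ i =>
  ∀ ⦃X Y : SSet⦄ (p : X ⟶ Y), T p → HasLiftingProperty i p

/-- Inner anodyne maps: the weakly saturated class generated by the inner horn
inclusions, characterized by the left lifting property against all maps having the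
right lifting property against the inner horn inclusions. -/
def InnerAnodyne : MorphismProperty SSet := LLP (RLP InnerHornInclusions)

namespace IA
set_option linter.unusedSectionVars false

variable {S : Type} [PartialOrder S]

def Bad (x₀ x₁ x₂ : S) (C : Set S) : Prop := x₁ ∈ C ∧ ¬ C ⊆ {x₀, x₁, x₂}
def HasLow (x₀ : S) (C : Set S) : Prop := ∃ a ∈ C, a < x₀
open Classical in
noncomputable def stage (x₀ x₁ x₂ : S) (C : Set S) : ℕ :=
  if Bad x₀ x₁ x₂ C then
    (if HasLow x₀ C then 2 * (C ∪ {x₀}).ncard + 1 else 2 * (C ∪ {x₂}).ncard)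
  else 0

open Classical in
noncomputable def tog (x₀ x₂ : S) (C : Set S) : S := if HasLow x₀ C then x₀ else x₂

noncomputable def big (x₀ x₂ : S) (C : Set S) : Set S := C ∪ {tog x₀ x₂ C}

variable {x₀ x₁ x₂ : S}

lemma stage_of_not_bad {C : Set S} (h : ¬ Bad x₀ x₁ x₂ C) : stage x₀ x₁ x₂ C = 0 := if_neg h

lemma bad_of_stage_ne_zero {C : Set S} (h : stage x₀ x₁ x₂ C ≠ 0) : Bad x₀ x₁ x₂ C := by
  by_contra hb; exact h (stage_of_not_bad hb)

lemma stage_pos_of_bad {C : Set S} (h : Bad x₀ x₁ x₂ C) (hfin : C.Finite) :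
    1 ≤ stage x₀ x₁ x₂ C := by
  have h2 : ∀ y : S, 1 ≤ (C ∪ {y}).ncard := fun y =>
    (Set.ncard_pos (hfin.union (Set.finite_singleton y))).mpr ⟨y, Or.inr rfl⟩
  rw [stage, if_pos h]
  split <;> [omega; skip]
  have := h2 x₂; omega

lemma stage_odd_iff {C : Set S} (h : Bad x₀ x₁ x₂ C) :
    Odd (stage x₀ x₁ x₂ C) ↔ HasLow x₀ C := by
  rw [stage, if_pos h]
  by_cases hl : HasLow x₀ C
  · rw [if_pos hl]; simp [hl, parity_simps]
  · rw [if_neg hl]; simp [hl, parity_simps]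

lemma bad_mono {C' C : Set S} (h : C' ⊆ C) (hb : Bad x₀ x₁ x₂ C') : Bad x₀ x₁ x₂ C :=
  ⟨h hb.1, fun hs => hb.2 (Set.Subset.trans h hs)⟩

lemma hasLow_mono {C' C : Set S} (h : C' ⊆ C) (hl : HasLow x₀ C') : HasLow x₀ C := by
  obtain ⟨a, ha, hlt⟩ := hl; exact ⟨a, h ha, hlt⟩

lemma stage_mono {C' C : Set S} (h : C' ⊆ C) (hfin : C.Finite) :
    stage x₀ x₁ x₂ C' ≤ stage x₀ x₁ x₂ C := by
  by_cases hb' : Bad x₀ x₁ x₂ C'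
  · have hb : Bad x₀ x₁ x₂ C := bad_mono h hb'
    have hfin' : C'.Finite := hfin.subset h
    rw [stage, stage, if_pos hb', if_pos hb]
    by_cases hl' : HasLow x₀ C'
    · rw [if_pos hl', if_pos (hasLow_mono h hl')]
      have : (C' ∪ {x₀}).ncard ≤ (C ∪ {x₀}).ncard :=
        Set.ncard_le_ncard (Set.union_subset_union_left _ h)
          (hfin.union (Set.finite_singleton _))
      omega
    · rw [if_neg hl']
      by_cases hl : HasLow x₀ C
      · rw [if_pos hl]
        obtain ⟨a, haC, hlt⟩ := hl
        have haC' : a ∉ C' := fun hx => hl' ⟨a, hx, hlt⟩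
        have h1 : C' ⊆ C \ {a} := fun y hy => ⟨h hy, fun hya => haC' (by rw [Set.mem_singleton_iff] at hya; rwa [hya] at hy)⟩
        have h2 : (C' ∪ {x₂}).ncard ≤ (C \ {a}).ncard + 1 := by
          refine le_trans (Set.ncard_union_le _ _) ?_
          have := Set.ncard_le_ncard h1 (hfin.diff)
          simp only [Set.ncard_singleton]; omega
        have h3 : (C \ {a}).ncard = C.ncard - 1 := Set.ncard_diff_singleton_of_mem haC
        have h4 : 1 ≤ C.ncard := (Set.ncard_pos hfin).mpr ⟨a, haC⟩
        have h5 : C.ncard ≤ (C ∪ {x₀}).ncard :=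
          Set.ncard_le_ncard Set.subset_union_left (hfin.union (Set.finite_singleton _))
        omega
      · rw [if_neg hl]
        have : (C' ∪ {x₂}).ncard ≤ (C ∪ {x₂}).ncard :=
          Set.ncard_le_ncard (Set.union_subset_union_left _ h)
            (hfin.union (Set.finite_singleton _))
        omega
  · rw [stage_of_not_bad hb']; exact Nat.zero_le _


lemma side_of_mem (hgreatest : IsGreatest {r : S | r ≠ x₁ ∧ r ≤ x₁} x₀)
    (hleast : IsLeast {r : S | r ≠ x₁ ∧ x₁ ≤ r} x₂)
    {C : Set S} (hch : IsChain (· ≤ ·) C) (hx₁ : x₁ ∈ C)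
    {c : S} (hc : c ∈ C) (hne : c ≠ x₁) : c ≤ x₀ ∨ x₂ ≤ c := by
  rcases eq_or_ne c x₁ with h | h
  · exact absurd h hne
  rcases hch.total hc hx₁ with h | h
  · exact Or.inl (hgreatest.2 ⟨hne, h⟩)
  · exact Or.inr (hleast.2 ⟨hne, h⟩)

lemma tog_mem_Q {C : Set S} : tog x₀ x₂ C ∈ ({x₀, x₁, x₂} : Set S) := by
  rw [tog]; split
  · exact Or.inl rfl
  · exact Or.inr (Or.inr rfl)

lemma x₁_ne_tog (h01 : x₀ < x₁) (h12 : x₁ < x₂) {C : Set S} : x₁ ≠ tog x₀ x₂ C := by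
  rw [tog]; split
  · exact h01.ne'
  · exact h12.ne

lemma subset_big {C : Set S} : C ⊆ big x₀ x₂ C := Set.subset_union_left

lemma tog_mem_big {C : Set S} : tog x₀ x₂ C ∈ big x₀ x₂ C := Or.inr rfl

lemma big_isChain (h01 : x₀ < x₁) (h12 : x₁ < x₂)
    (hgreatest : IsGreatest {r : S | r ≠ x₁ ∧ r ≤ x₁} x₀)
    (hleast : IsLeast {r : S | r ≠ x₁ ∧ x₁ ≤ r} x₂)
    {C : Set S} (hch : IsChain (· ≤ ·) C) (hx₁ : x₁ ∈ C) :
    IsChain (· ≤ ·) (big x₀ x₂ C) := by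
  have htc : ∀ c ∈ C, c ≤ tog x₀ x₂ C ∨ tog x₀ x₂ C ≤ c := by
    intro c hc
    rcases eq_or_ne c x₁ with rfl | hne
    · rw [tog]; split
      · exact Or.inr h01.le
      · exact Or.inl h12.le
    · rcases side_of_mem hgreatest hleast hch hx₁ hc hne with h | h
      · rw [tog]; split
        · exact Or.inl h
        · exact Or.inl (h.trans (h01.le.trans h12.le))
      · rw [tog]; split
        · exact Or.inr ((h01.le.trans h12.le).trans h)
        · exact Or.inr h
  rintro a (ha | ha) b (hb | hb) hab
  · exact hch ha hb hab
  · rw [Set.mem_singleton_iff] at hb; subst hb; exact htc a ha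
  · rw [Set.mem_singleton_iff] at ha; subst ha; exact (htc b hb).symm
  · rw [Set.mem_singleton_iff] at ha hb; exact absurd (ha.trans hb.symm) hab

lemma big_finite {C : Set S} (hfin : C.Finite) : (big x₀ x₂ C).Finite :=
  hfin.union (Set.finite_singleton _)

lemma hasLow_big (h01 : x₀ < x₁) (h12 : x₁ < x₂) {C : Set S} :
    HasLow x₀ (big x₀ x₂ C) ↔ HasLow x₀ C := by
  constructor
  · rintro ⟨a, (ha | ha), hlt⟩
    · exact ⟨a, ha, hlt⟩
    · rw [Set.mem_singleton_iff] at ha; subst ha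
      exfalso
      rw [tog] at hlt
      split at hlt
      · exact lt_irrefl _ hlt
      · exact absurd (hlt.trans (h01.trans h12)) (lt_irrefl _)
  · rintro ⟨a, ha, hlt⟩; exact ⟨a, Or.inl ha, hlt⟩

lemma tog_big (h01 : x₀ < x₁) (h12 : x₁ < x₂) {C : Set S} :
    tog x₀ x₂ (big x₀ x₂ C) = tog x₀ x₂ C := by
  classical
  rw [tog, tog]
  by_cases hl : HasLow x₀ C
  · rw [if_pos hl, if_pos ((hasLow_big h01 h12).mpr hl)]
  · rw [if_neg hl, if_neg (fun h => hl ((hasLow_big h01 h12).mp h))]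

lemma big_idem (h01 : x₀ < x₁) (h12 : x₁ < x₂) {C : Set S} :
    big x₀ x₂ (big x₀ x₂ C) = big x₀ x₂ C := by
  rw [big, tog_big h01 h12]
  exact Set.union_eq_self_of_subset_right (Set.singleton_subset_iff.mpr tog_mem_big)

lemma big_bad {C : Set S} (hb : Bad x₀ x₁ x₂ C) : Bad x₀ x₁ x₂ (big x₀ x₂ C) :=
  ⟨subset_big hb.1, fun hs => hb.2 (subset_big.trans hs)⟩

lemma stage_big (h01 : x₀ < x₁) (h12 : x₁ < x₂) {C : Set S} (hb : Bad x₀ x₁ x₂ C) :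
    stage x₀ x₁ x₂ (big x₀ x₂ C) = stage x₀ x₁ x₂ C := by
  rw [stage, stage, if_pos (big_bad hb), if_pos hb]
  by_cases hl : HasLow x₀ C
  · rw [if_pos hl, if_pos ((hasLow_big h01 h12).mpr hl)]
    have : big x₀ x₂ C ∪ {x₀} = C ∪ {x₀} := by
      rw [big, tog, if_pos hl, Set.union_assoc, Set.union_self]
    rw [this]
  · rw [if_neg hl, if_neg (fun h => hl ((hasLow_big h01 h12).mp h))]
    have : big x₀ x₂ C ∪ {x₂} = C ∪ {x₂} := by
      rw [big, tog, if_neg hl, Set.union_assoc, Set.union_self]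
    rw [this]


-- ## Face lemmas

lemma ncard_pos_of_mem {D : Set S} {c : S} (hc : c ∈ D) (hfin : D.Finite) : 1 ≤ D.ncard :=
  (Set.ncard_pos hfin).mpr ⟨c, hc⟩

lemma union_eq_self_of_mem {D : Set S} {c : S} (hc : c ∈ D) : D ∪ {c} = D :=
  Set.union_eq_self_of_subset_right (Set.singleton_subset_iff.mpr hc)

/-- Removing any element other than the toggle from a "big" chain strictly lowers the stage. -/
lemma stage_diff_lt {D : Set S} (hb : Bad x₀ x₁ x₂ D) (hfin : D.Finite)
    (htog : tog x₀ x₂ D ∈ D) {c : S} (hc : c ∈ D) (hctog : c ≠ tog x₀ x₂ D) :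
    stage x₀ x₁ x₂ (D \ {c}) < stage x₀ x₁ x₂ D := by
  have hpos := stage_pos_of_bad hb hfin
  have h1 : 1 ≤ D.ncard := ncard_pos_of_mem hc hfin
  have hGcard : (D \ {c}).ncard = D.ncard - 1 := Set.ncard_diff_singleton_of_mem hc
  by_cases hbG : Bad x₀ x₁ x₂ (D \ {c})
  swap
  · rw [stage_of_not_bad hbG]; omega
  by_cases hl : HasLow x₀ D
  · -- toggle is x₀ ∈ D
    have htx : tog x₀ x₂ D = x₀ := if_pos hl
    rw [htx] at htog hctog
    have hDst : stage x₀ x₁ x₂ D = 2 * D.ncard + 1 := by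
      rw [stage, if_pos hb, if_pos hl, union_eq_self_of_mem htog]
    rw [hDst, stage, if_pos hbG]
    by_cases hlG : HasLow x₀ (D \ {c})
    · rw [if_pos hlG, union_eq_self_of_mem (Set.mem_diff_of_mem htog (by simpa using hctog.symm))]
      omega
    · rw [if_neg hlG]
      have : ((D \ {c}) ∪ {x₂}).ncard ≤ (D \ {c}).ncard + 1 :=
        le_trans (Set.ncard_union_le _ _) (by simp)
      omega
  · -- toggle is x₂ ∈ D
    have htx : tog x₀ x₂ D = x₂ := if_neg hl
    rw [htx] at htog hctog
    have hDst : stage x₀ x₁ x₂ D = 2 * D.ncard := by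
      rw [stage, if_pos hb, if_neg hl, union_eq_self_of_mem htog]
    have hlG : ¬ HasLow x₀ (D \ {c}) := fun h => hl (hasLow_mono Set.diff_subset h)
    rw [hDst, stage, if_pos hbG, if_neg hlG,
      union_eq_self_of_mem (Set.mem_diff_of_mem htog (by simpa using hctog.symm))]
    omega

/-- Removing the toggle does not change the stage. -/
lemma stage_diff_tog (h01 : x₀ < x₁) (h12 : x₁ < x₂) {D : Set S}
    (hb : Bad x₀ x₁ x₂ D) (htog : tog x₀ x₂ D ∈ D) :
    stage x₀ x₁ x₂ (D \ {tog x₀ x₂ D}) = stage x₀ x₁ x₂ D := by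
  obtain ⟨u, hu, huQ⟩ : ∃ u ∈ D, u ∉ ({x₀, x₁, x₂} : Set S) := by
    by_contra h; push_neg at h; exact hb.2 h
  have hbG : Bad x₀ x₁ x₂ (D \ {tog x₀ x₂ D}) := by
    constructor
    · exact Set.mem_diff_of_mem hb.1 (by simpa using x₁_ne_tog h01 h12)
    · intro hsub
      exact huQ (hsub (Set.mem_diff_of_mem hu (by simp; intro he; exact huQ (he ▸ tog_mem_Q))))
  have hins : (D \ {tog x₀ x₂ D}) ∪ {tog x₀ x₂ D} = D := by
    rw [Set.diff_union_self]; exact union_eq_self_of_mem htog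
  by_cases hl : HasLow x₀ D
  · have htx : tog x₀ x₂ D = x₀ := if_pos hl
    have hlG : HasLow x₀ (D \ {tog x₀ x₂ D}) := by
      obtain ⟨a, ha, hlt⟩ := hl
      exact ⟨a, Set.mem_diff_of_mem ha (by simp [htx]; exact hlt.ne), hlt⟩
    have k1 : (D \ {tog x₀ x₂ D}) ∪ {x₀} = D := by
      rw [show ({x₀} : Set S) = {tog x₀ x₂ D} from by rw [htx], hins]
    have k2 : D ∪ {x₀} = D := union_eq_self_of_mem (htx ▸ htog)
    rw [stage, stage, if_pos hbG, if_pos hb, if_pos hlG, if_pos hl, k1, k2]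
  · have htx : tog x₀ x₂ D = x₂ := if_neg hl
    have hlG : ¬ HasLow x₀ (D \ {tog x₀ x₂ D}) := fun h => hl (hasLow_mono Set.diff_subset h)
    have k1 : (D \ {tog x₀ x₂ D}) ∪ {x₂} = D := by
      rw [show ({x₂} : Set S) = {tog x₀ x₂ D} from by rw [htx], hins]
    have k2 : D ∪ {x₂} = D := union_eq_self_of_mem (htx ▸ htog)
    rw [stage, stage, if_pos hbG, if_pos hb, if_neg hlG, if_neg hl, k1, k2]

/-- Any chain between `D \ {tog}` and `D` has the same stage as `D`. -/
lemma stage_between (h01 : x₀ < x₁) (h12 : x₁ < x₂) {D E : Set S}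
    (hb : Bad x₀ x₁ x₂ D) (hfin : D.Finite) (htog : tog x₀ x₂ D ∈ D)
    (h1 : D \ {tog x₀ x₂ D} ⊆ E) (h2 : E ⊆ D) : stage x₀ x₁ x₂ E = stage x₀ x₁ x₂ D :=
  le_antisymm (stage_mono h2 hfin)
    (by rw [← stage_diff_tog h01 h12 hb htog]; exact stage_mono h1 (hfin.subset h2))

/-- If a bad chain has no element below `x₀`, it has one above `x₂`. -/
lemma exists_high (hgreatest : IsGreatest {r : S | r ≠ x₁ ∧ r ≤ x₁} x₀)
    (hleast : IsLeast {r : S | r ≠ x₁ ∧ x₁ ≤ r} x₂) {C : Set S}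
    (hb : Bad x₀ x₁ x₂ C) (hch : IsChain (· ≤ ·) C) (hl : ¬ HasLow x₀ C) :
    ∃ b ∈ C, x₂ < b := by
  obtain ⟨u, hu, huQ⟩ : ∃ u ∈ C, u ∉ ({x₀, x₁, x₂} : Set S) := by
    by_contra h; push_neg at h; exact hb.2 h
  simp only [Set.mem_insert_iff, Set.mem_singleton_iff, not_or] at huQ
  obtain ⟨h0, h1, h2⟩ := huQ
  rcases side_of_mem hgreatest hleast hch hb.1 hu h1 with h | h
  · exact absurd ⟨u, hu, lt_of_le_of_ne h h0⟩ hl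
  · exact ⟨u, hu, lt_of_le_of_ne h (Ne.symm h2)⟩

/-- Two nested bad chains with the same stage have the same big chain. -/
lemma big_eq_of_sub (h01 : x₀ < x₁) (h12 : x₁ < x₂) {C' C : Set S}
    (hb' : Bad x₀ x₁ x₂ C') (hb : Bad x₀ x₁ x₂ C) (hsub : C' ⊆ C) (hfin : C.Finite)
    (hst : stage x₀ x₁ x₂ C' = stage x₀ x₁ x₂ C) : big x₀ x₂ C' = big x₀ x₂ C := by
  have hlow : HasLow x₀ C' ↔ HasLow x₀ C := by
    rw [← stage_odd_iff hb', ← stage_odd_iff hb, hst]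
  have htogeq : tog x₀ x₂ C' = tog x₀ x₂ C := by
    classical
    rw [tog, tog]
    by_cases hl : HasLow x₀ C'
    · rw [if_pos hl, if_pos (hlow.mp hl)]
    · rw [if_neg hl, if_neg (fun h => hl (hlow.mpr h))]
  have hsubbig : big x₀ x₂ C' ⊆ big x₀ x₂ C := by
    rw [big, big, htogeq]; exact Set.union_subset_union_left _ hsub
  refine Set.eq_of_subset_of_ncard_le hsubbig ?_ (big_finite hfin)
  have e1 := stage_big h01 h12 hb'
  have e2 := stage_big h01 h12 hb
  have hbb' := big_bad (x₁ := x₁) hb'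
  have hbb := big_bad (x₁ := x₁) hb
  rw [hst] at e1
  -- now stage (big C') = stage (big C); extract ncard equality
  have e3 : stage x₀ x₁ x₂ (big x₀ x₂ C') = stage x₀ x₁ x₂ (big x₀ x₂ C) := by rw [e1, e2]
  rw [stage, stage, if_pos hbb', if_pos hbb] at e3
  by_cases hl : HasLow x₀ C'
  · rw [if_pos ((hasLow_big h01 h12).mpr hl), if_pos ((hasLow_big h01 h12).mpr (hlow.mp hl))] at e3
    have g1 : big x₀ x₂ C' ∪ {x₀} = big x₀ x₂ C' :=
      union_eq_self_of_mem (by rw [big, tog, if_pos hl]; exact Or.inr rfl)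
    have g2 : big x₀ x₂ C ∪ {x₀} = big x₀ x₂ C :=
      union_eq_self_of_mem (by rw [big, tog, if_pos (hlow.mp hl)]; exact Or.inr rfl)
    rw [g1, g2] at e3; omega
  · rw [if_neg (fun h => hl ((hasLow_big h01 h12).mp h)),
      if_neg (fun h => (hl (hlow.mpr ((hasLow_big h01 h12).mp h))))] at e3
    have g1 : big x₀ x₂ C' ∪ {x₂} = big x₀ x₂ C' :=
      union_eq_self_of_mem (by rw [big, tog, if_neg hl]; exact Or.inr rfl)
    have g2 : big x₀ x₂ C ∪ {x₂} = big x₀ x₂ C :=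
      union_eq_self_of_mem (by rw [big, tog, if_neg (fun h => hl (hlow.mpr h))]; exact Or.inr rfl)
    rw [g1, g2] at e3; omega


-- ## The simplicial layer

open GrothendieckTopology SSet

lemma range_isChain {n : ℕ} (σ : ComposableArrows S n) :
    IsChain (· ≤ ·) (Set.range σ.obj) := by
  rintro - ⟨i, rfl⟩ - ⟨j, rfl⟩ -
  rcases le_total i j with h | h
  · exact Or.inl (leOfHom (σ.map (homOfLE h)))
  · exact Or.inr (leOfHom (σ.map (homOfLE h)))

lemma obj_monotone {n : ℕ} (σ : ComposableArrows S n) : Monotone σ.obj :=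
  fun _ _ h => leOfHom (σ.map (homOfLE h))

/-- The filtration of `nerve S`. -/
noncomputable def Z (x₀ x₁ x₂ : S) (k : ℕ) : Subfunctor (nerve S) where
  obj m := {σ | stage x₀ x₁ x₂ (Set.range σ.obj) ≤ k}
  map {m m'} φ := by
    intro σ hσ
    refine le_trans (stage_mono ?_ (Set.finite_range _)) hσ
    rintro - ⟨i, rfl⟩
    exact ⟨φ.unop.toOrderHom i, rfl⟩

lemma Z_le (k : ℕ) : Z x₀ x₁ x₂ k ≤ Z x₀ x₁ x₂ (k+1) :=
  fun _ _ h => le_trans h (Nat.le_succ k)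

/-- The data of an enumeration of a big chain `D`, with the position `i₀` of the toggle. -/
structure BigCell (x₀ x₂ : S) (D : Set S) where
  n : ℕ
  e : Fin (n + 1) → S
  idx : S → Fin (n + 1)
  strict : StrictMono e
  mem_e : ∀ i, e i ∈ D
  right_inv : ∀ d ∈ D, e (idx d) = d
  i₀ : Fin (n + 1)
  e_i₀ : e i₀ = tog x₀ x₂ D
  h0 : 0 < (i₀ : ℕ)
  hn : (i₀ : ℕ) < n

lemma BigCell.left_inv {D : Set S} (cd : BigCell x₀ x₂ D) (i : Fin (cd.n + 1)) :
    cd.idx (cd.e i) = i :=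
  cd.strict.injective (cd.right_inv _ (cd.mem_e i))

/-- `D` is a big chain to be attached at stage `k+1`. -/
def IsBigAt (x₀ x₁ x₂ : S) (D : Set S) (k : ℕ) : Prop :=
  Bad x₀ x₁ x₂ D ∧ IsChain (· ≤ ·) D ∧ D.Finite ∧ tog x₀ x₂ D ∈ D ∧
    stage x₀ x₁ x₂ D = k + 1

section MkCell

variable (h01 : x₀ < x₁) (h12 : x₁ < x₂)
  (hgreatest : IsGreatest {r : S | r ≠ x₁ ∧ r ≤ x₁} x₀)
  (hleast : IsLeast {r : S | r ≠ x₁ ∧ x₁ ≤ r} x₂)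

noncomputable def chainLin {D : Set S} (h : IsChain (· ≤ ·) D) : LinearOrder D where
  __ := (inferInstance : PartialOrder D)
  le_total a b := by
    rcases eq_or_ne a b with rfl | hne
    · exact Or.inl le_rfl
    · exact h.total a.2 b.2
  toDecidableLE := Classical.decRel _

noncomputable def chainIso {D : Set S} (hch : IsChain (· ≤ ·) D)
    (hfin : D.Finite) : Fin (D.ncard) ≃o D := by
  letI := chainLin hch
  letI := hfin.fintype
  exact monoEquivOfFin D (by rw [Set.ncard_eq_toFinset_card']; simp [Set.toFinset_card])

/-- Construction of the cell data for a big chain. -/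
noncomputable def mkBigCell {D : Set S} {k : ℕ} (hD : IsBigAt x₀ x₁ x₂ D k) :
    BigCell x₀ x₂ D := by
  classical
  obtain ⟨hb, hch, hfin, htog, hst⟩ := hD
  have h1 : 1 ≤ D.ncard := ncard_pos_of_mem hb.1 hfin
  have hcard : D.ncard = (D.ncard - 1) + 1 := by omega
  set E : Fin (D.ncard) ≃o D := chainIso hch hfin with hE
  set e : Fin (D.ncard - 1 + 1) → S := fun i => (E (Fin.cast hcard.symm i) : S) with he
  have estrict : StrictMono e := fun i j hij => by
    exact E.lt_iff_lt.mpr hij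
  set idx : S → Fin (D.ncard - 1 + 1) :=
    fun s => if h : s ∈ D then Fin.cast hcard (E.symm ⟨s, h⟩) else 0 with hidx
  have mem_e : ∀ i, e i ∈ D := fun i => (E (Fin.cast hcard.symm i)).2
  have right_inv : ∀ d ∈ D, e (idx d) = d := by
    intro d hd
    rw [hidx]
    simp only [dif_pos hd, he]
    rw [Fin.cast_cast, Fin.cast_eq_self]
    exact congrArg Subtype.val (E.apply_symm_apply ⟨d, hd⟩)
  have low : ∃ a ∈ D, a < tog x₀ x₂ D := by
    by_cases hl : HasLow x₀ D
    · obtain ⟨a, ha, hlt⟩ := id hl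
      exact ⟨a, ha, by rw [tog, if_pos hl]; exact hlt⟩
    · exact ⟨x₁, hb.1, by rw [tog, if_neg hl]; exact h12⟩
  have high : ∃ b ∈ D, tog x₀ x₂ D < b := by
    by_cases hl : HasLow x₀ D
    · exact ⟨x₁, hb.1, by rw [tog, if_pos hl]; exact h01⟩
    · obtain ⟨u, hu, hlt⟩ := exists_high hgreatest hleast hb hch hl
      exact ⟨u, hu, by rw [tog, if_neg hl]; exact hlt⟩
  have e_i₀ : e (idx (tog x₀ x₂ D)) = tog x₀ x₂ D := right_inv _ htog
  refine { n := D.ncard - 1, e := e, idx := idx, strict := estrict, mem_e := mem_e,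
           right_inv := right_inv, i₀ := idx (tog x₀ x₂ D), e_i₀ := e_i₀,
           h0 := ?_, hn := ?_ }
  · obtain ⟨a, ha, hlt⟩ := low
    have : idx a < idx (tog x₀ x₂ D) := by
      rw [← estrict.lt_iff_lt, right_inv a ha, e_i₀]
      exact hlt
    have := Fin.lt_def.mp this
    omega
  · obtain ⟨u, hu, hlt⟩ := high
    have h2 : idx (tog x₀ x₂ D) < idx u := by
      rw [← estrict.lt_iff_lt, right_inv u hu, e_i₀]
      exact hlt
    have h3 := Fin.lt_def.mp h2
    have h4 := (idx u).isLt
    omega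

end MkCell

-- ## Characteristic maps

lemma cArrows_ext {n : ℕ} {F G : ComposableArrows S n} (h : ∀ i, F.obj i = G.obj i) : F = G :=
  CategoryTheory.Functor.ext h (fun _ _ _ => Subsingleton.elim _ _)

lemma nerve_map_obj {m m' : SimplexCategoryᵒᵖ} (φ : m ⟶ m') (σ : (nerve S).obj m)
    (i : Fin (m'.unop.len + 1)) :
    ((nerve S).map φ σ).obj i = σ.obj (φ.unop.toOrderHom i) := rfl

variable {x₀ x₁ x₂ : S}

/-- The characteristic simplex of a big chain. -/
noncomputable def cellSimp {D : Set S} (cd : BigCell x₀ x₂ D) :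
    (nerve S).obj (Opposite.op (SimplexCategory.mk cd.n)) :=
  cd.strict.monotone.functor

lemma cellSimp_obj {D : Set S} (cd : BigCell x₀ x₂ D) (i : Fin (cd.n + 1)) :
    (cellSimp cd).obj i = cd.e i := rfl

/-- The factorization of a simplex with vertices in `D` through the characteristic
simplex of `D`. -/
noncomputable def facHom {D : Set S} (cd : BigCell x₀ x₂ D) {m : SimplexCategoryᵒᵖ}
    (σ : (nerve S).obj m) (hσ : ∀ i, σ.obj i ∈ D) :
    m.unop ⟶ (SimplexCategory.mk cd.n) :=
  SimplexCategory.Hom.mk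
    ⟨fun i => cd.idx (σ.obj i), by
      intro i j hij
      have h1 : σ.obj i ≤ σ.obj j := obj_monotone σ hij
      rw [← cd.strict.le_iff_le, cd.right_inv _ (hσ i), cd.right_inv _ (hσ j)]
      exact h1⟩

lemma facHom_spec {D : Set S} (cd : BigCell x₀ x₂ D) {m : SimplexCategoryᵒᵖ}
    (σ : (nerve S).obj m) (hσ : ∀ i, σ.obj i ∈ D) :
    (nerve S).map (facHom cd σ hσ).op (cellSimp cd) = σ := by
  apply cArrows_ext
  intro i
  exact cd.right_inv _ (hσ i)

lemma facHom_comp {D : Set S} (cd : BigCell x₀ x₂ D) {m m' : SimplexCategoryᵒᵖ}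
    (φ : m ⟶ m') (σ : (nerve S).obj m) (hσ : ∀ i, σ.obj i ∈ D)
    (hσ' : ∀ i, ((nerve S).map φ σ).obj i ∈ D) :
    facHom cd ((nerve S).map φ σ) hσ' = φ.unop ≫ facHom cd σ hσ := rfl



-- ## The horn square for a big cell

section Step

variable (h01 : x₀ < x₁) (h12 : x₁ < x₂)
  (hgreatest : IsGreatest {r : S | r ≠ x₁ ∧ r ≤ x₁} x₀)
  (hleast : IsLeast {r : S | r ≠ x₁ ∧ x₁ ≤ r} x₂)
variable {X Y : SSet} (p : X ⟶ Y) {k : ℕ}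
variable (t : (Z x₀ x₁ x₂ k).toFunctor ⟶ X) (b : (Z x₀ x₁ x₂ (k+1)).toFunctor ⟶ Y)

/-- The horn of the characteristic simplex of a big chain maps into the previous stage. -/
noncomputable def hornMap {D : Set S} {k : ℕ} (hD : IsBigAt x₀ x₁ x₂ D k)
    (cd : BigCell x₀ x₂ D) :
    (Λ[cd.n, cd.i₀] : SSet) ⟶ (Z x₀ x₁ x₂ k).toFunctor where
  app m := TypeCat.ofHom fun α => by
    refine ⟨(nerve S).map ((stdSimplex.objEquiv) α.1).op (cellSimp cd), ?_⟩
    obtain ⟨j, hj⟩ : ∃ j, j ∉ Set.range (stdSimplex.asOrderHom α.1) ∪ {cd.i₀} := by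
      by_contra h
      push_neg at h
      exact α.2 (Set.eq_univ_iff_forall.mpr h)
    simp only [Set.mem_union, Set.mem_range, Set.mem_singleton_iff, not_or, not_exists] at hj
    obtain ⟨hj1, hj2⟩ := hj
    have hcD : cd.e j ∈ D := cd.mem_e j
    have hctog : cd.e j ≠ tog x₀ x₂ D := by
      rw [← cd.e_i₀]
      exact fun h => hj2 (cd.strict.injective h)
    have hsub : Set.range ((nerve S).map ((stdSimplex.objEquiv) α.1).op
        (cellSimp cd)).obj ⊆ D \ {cd.e j} := by
      rintro - ⟨i, rfl⟩
      rw [nerve_map_obj, cellSimp_obj]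
      refine ⟨cd.mem_e _, ?_⟩
      simp only [Set.mem_singleton_iff]
      exact fun h => hj1 _ (cd.strict.injective h)
    have h2 := stage_mono (x₀ := x₀) (x₁ := x₁) (x₂ := x₂) hsub (hD.2.2.1.diff)
    have h3 := stage_diff_lt (x₁ := x₁) hD.1 hD.2.2.1 hD.2.2.2.1 (cd.mem_e j) hctog
    have h4 := hD.2.2.2.2
    show stage x₀ x₁ x₂ (Set.range ((nerve S).map ((stdSimplex.objEquiv) α.1).op
        (cellSimp cd)).obj) ≤ k
    omega
  naturality m m' φ := by
    ext α
    apply Subtype.ext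
    show (nerve S).map ((stdSimplex.objEquiv) ((Δ[cd.n]).map φ α.1)).op (cellSimp cd) = _
    rw [stdSimplex.map_apply, Equiv.apply_symm_apply, op_comp,
      FunctorToTypes.map_comp_apply]
    rfl

/-- The characteristic map into stage `k+1`. -/
noncomputable def charB {D : Set S} {k : ℕ} (hD : IsBigAt x₀ x₁ x₂ D k)
    (cd : BigCell x₀ x₂ D) :
    (Δ[cd.n] : SSet) ⟶ (Z x₀ x₁ x₂ (k+1)).toFunctor where
  app m := TypeCat.ofHom fun α => by
    refine ⟨(nerve S).map ((stdSimplex.objEquiv) α).op (cellSimp cd), ?_⟩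
    have hsub : Set.range ((nerve S).map ((stdSimplex.objEquiv) α).op
        (cellSimp cd)).obj ⊆ D := by
      rintro - ⟨i, rfl⟩
      exact cd.mem_e _
    have h2 := stage_mono (x₀ := x₀) (x₁ := x₁) (x₂ := x₂) hsub hD.2.2.1
    have h4 := hD.2.2.2.2
    show stage x₀ x₁ x₂ (Set.range ((nerve S).map ((stdSimplex.objEquiv) α).op
        (cellSimp cd)).obj) ≤ k + 1
    omega
  naturality m m' φ := by
    ext α
    apply Subtype.ext
    show (nerve S).map ((stdSimplex.objEquiv) ((Δ[cd.n]).map φ α)).op (cellSimp cd) = _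
    rw [stdSimplex.map_apply, Equiv.apply_symm_apply, op_comp,
      FunctorToTypes.map_comp_apply]
    rfl

lemma sqCell (hcomm : t ≫ p = Subfunctor.homOfLe (Z_le k) ≫ b)
    {D : Set S} (hD : IsBigAt x₀ x₁ x₂ D k) (cd : BigCell x₀ x₂ D) :
    CommSq (hornMap hD cd ≫ t) ((SSet.horn cd.n cd.i₀).ι) p (charB hD cd ≫ b) := by
  constructor
  apply NatTrans.ext
  funext m; ext α
  show p.app m (t.app m ((hornMap hD cd).app m α)) = b.app m ((charB hD cd).app m α.1)
  have h1 : p.app m (t.app m ((hornMap hD cd).app m α)) =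
      (t ≫ p).app m ((hornMap hD cd).app m α) := rfl
  rw [h1, hcomm]
  show b.app m _ = b.app m _
  apply congrArg
  apply Subtype.ext
  rfl

/-- The chosen lift for the horn square of a big chain. -/
noncomputable def cellL (hcomm : t ≫ p = Subfunctor.homOfLe (Z_le k) ≫ b)
    (hp : RLP InnerHornInclusions p) {D : Set S}
    (hD : IsBigAt x₀ x₁ x₂ D k) (cd : BigCell x₀ x₂ D) : (Δ[cd.n] : SSet) ⟶ X :=
  letI := hp ((SSet.horn cd.n cd.i₀).ι) ⟨cd.n, cd.i₀, cd.h0, cd.hn, ⟨Iso.refl _⟩⟩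
  letI := HasLiftingProperty.sq_hasLift (sqCell p t b hcomm hD cd)
  (sqCell p t b hcomm hD cd).lift

lemma cellL_fac_left (hcomm : t ≫ p = Subfunctor.homOfLe (Z_le k) ≫ b)
    (hp : RLP InnerHornInclusions p) {D : Set S}
    (hD : IsBigAt x₀ x₁ x₂ D k) (cd : BigCell x₀ x₂ D) :
    (SSet.horn cd.n cd.i₀).ι ≫ cellL p t b hcomm hp hD cd = hornMap hD cd ≫ t := by
  rw [cellL]
  letI := hp ((SSet.horn cd.n cd.i₀).ι) ⟨cd.n, cd.i₀, cd.h0, cd.hn, ⟨Iso.refl _⟩⟩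
  letI := HasLiftingProperty.sq_hasLift (sqCell p t b hcomm hD cd)
  exact (sqCell p t b hcomm hD cd).fac_left

lemma cellL_fac_right (hcomm : t ≫ p = Subfunctor.homOfLe (Z_le k) ≫ b)
    (hp : RLP InnerHornInclusions p) {D : Set S}
    (hD : IsBigAt x₀ x₁ x₂ D k) (cd : BigCell x₀ x₂ D) :
    cellL p t b hcomm hp hD cd ≫ p = charB hD cd ≫ b := by
  rw [cellL]
  letI := hp ((SSet.horn cd.n cd.i₀).ι) ⟨cd.n, cd.i₀, cd.h0, cd.hn, ⟨Iso.refl _⟩⟩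
  letI := HasLiftingProperty.sq_hasLift (sqCell p t b hcomm hD cd)
  exact (sqCell p t b hcomm hD cd).fac_right


-- ## The step values on new simplices

include h01 h12 hgreatest hleast in
lemma isBigAt_of_stage {m : SimplexCategoryᵒᵖ} (σ : (nerve S).obj m)
    (hσ : stage x₀ x₁ x₂ (Set.range σ.obj) = k + 1) :
    IsBigAt x₀ x₁ x₂ (big x₀ x₂ (Set.range σ.obj)) k := by
  have hbC : Bad x₀ x₁ x₂ (Set.range σ.obj) := bad_of_stage_ne_zero (by omega)
  refine ⟨big_bad hbC, big_isChain h01 h12 hgreatest hleast (range_isChain σ) hbC.1,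
    big_finite (Set.finite_range _), ?_, by rw [stage_big h01 h12 hbC, hσ]⟩
  rw [tog_big h01 h12]
  exact tog_mem_big

variable (hcomm : t ≫ p = Subfunctor.homOfLe (Z_le k) ≫ b) (hp : RLP InnerHornInclusions p)

/-- The value of the step lift on a newly attached simplex. -/
noncomputable def stepVal {m : SimplexCategoryᵒᵖ} (σ : (nerve S).obj m)
    (hσ : stage x₀ x₁ x₂ (Set.range σ.obj) = k + 1) : X.obj m :=
  (cellL p t b hcomm hp (isBigAt_of_stage h01 h12 hgreatest hleast σ hσ)
      (mkBigCell h01 h12 hgreatest hleast (isBigAt_of_stage h01 h12 hgreatest hleast σ hσ))).app m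
    ((stdSimplex.objEquiv).symm
      (facHom (mkBigCell h01 h12 hgreatest hleast (isBigAt_of_stage h01 h12 hgreatest hleast σ hσ))
        σ (fun i => subset_big ⟨i, rfl⟩)))

/-- Generic form of the value of the step lift. -/
noncomputable def cellVal {D : Set S} (hD : IsBigAt x₀ x₁ x₂ D k)
    {m : SimplexCategoryᵒᵖ} (σ : (nerve S).obj m) (hsub : ∀ i, σ.obj i ∈ D) : X.obj m :=
  (cellL p t b hcomm hp hD (mkBigCell h01 h12 hgreatest hleast hD)).app m
    ((stdSimplex.objEquiv).symm
      (facHom (mkBigCell h01 h12 hgreatest hleast hD) σ hsub))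

lemma stepVal_eq_cellVal {m : SimplexCategoryᵒᵖ} (σ : (nerve S).obj m)
    (hσ : stage x₀ x₁ x₂ (Set.range σ.obj) = k + 1) :
    stepVal h01 h12 hgreatest hleast p t b hcomm hp σ hσ =
      cellVal h01 h12 hgreatest hleast p t b hcomm hp
        (isBigAt_of_stage h01 h12 hgreatest hleast σ hσ) σ (fun i => subset_big ⟨i, rfl⟩) := rfl

/-- Naturality of the cell values. -/
lemma cellVal_map {D D' : Set S} (hDD : D' = D) (hD' : IsBigAt x₀ x₁ x₂ D' k)
    (hD : IsBigAt x₀ x₁ x₂ D k) {m m' : SimplexCategoryᵒᵖ} (φ : m ⟶ m')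
    (σ : (nerve S).obj m) (hsub : ∀ i, σ.obj i ∈ D)
    (hsub' : ∀ i, ((nerve S).map φ σ).obj i ∈ D') :
    cellVal h01 h12 hgreatest hleast p t b hcomm hp hD' ((nerve S).map φ σ) hsub' =
      X.map φ (cellVal h01 h12 hgreatest hleast p t b hcomm hp hD σ hsub) := by
  subst hDD
  have hDeq : hD' = hD := rfl
  subst hDeq
  set cd := mkBigCell h01 h12 hgreatest hleast hD' with hcd
  set L := cellL p t b hcomm hp hD' cd with hL
  rw [cellVal, cellVal, ← hcd, ← hL,
    facHom_comp cd φ σ hsub hsub']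
  have h1 : (stdSimplex.objEquiv).symm (φ.unop ≫ facHom cd σ hsub) =
      (Δ[cd.n]).map φ ((stdSimplex.objEquiv).symm (facHom cd σ hsub)) := by
    rw [stdSimplex.map_apply, Equiv.apply_symm_apply]
  rw [h1]
  exact types_congr_hom (L.naturality φ) _

/-- If a face of a new simplex is old, the cell value agrees with `t`. -/
lemma cellVal_old {D : Set S} (hD : IsBigAt x₀ x₁ x₂ D k)
    {m : SimplexCategoryᵒᵖ} (σ : (nerve S).obj m) (hsub : ∀ i, σ.obj i ∈ D)
    (hold : stage x₀ x₁ x₂ (Set.range σ.obj) ≤ k) :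
    cellVal h01 h12 hgreatest hleast p t b hcomm hp hD σ hsub = t.app m ⟨σ, hold⟩ := by
  set cd := mkBigCell h01 h12 hgreatest hleast hD with hcd
  set L := cellL p t b hcomm hp hD cd with hL
  -- the factorization lands in the horn
  have hh : Set.range (stdSimplex.asOrderHom ((stdSimplex.objEquiv).symm (facHom cd σ hsub)))
      ∪ {cd.i₀} ≠ Set.univ := by
    intro huniv
    -- otherwise D \ {tog} ⊆ range σ.obj and σ would be new
    have hrange : D \ {tog x₀ x₂ D} ⊆ Set.range σ.obj := by
      rintro d ⟨hd, hdt⟩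
      have hj : cd.idx d ≠ cd.i₀ := by
        intro h
        apply hdt
        rw [Set.mem_singleton_iff, ← cd.right_inv d hd, h, cd.e_i₀]
      have : cd.idx d ∈ Set.range (stdSimplex.asOrderHom ((stdSimplex.objEquiv).symm
          (facHom cd σ hsub))) ∪ {cd.i₀} := huniv ▸ Set.mem_univ _
      rcases this with h | h
      · obtain ⟨i, hi⟩ := h
        refine ⟨i, ?_⟩
        have : cd.idx (σ.obj i) = cd.idx d := hi
        have h2 : cd.e (cd.idx (σ.obj i)) = cd.e (cd.idx d) := by rw [this]
        rwa [cd.right_inv _ (hsub i), cd.right_inv _ hd] at h2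
      · exact absurd h hj
    have hrange2 : Set.range σ.obj ⊆ D := by rintro - ⟨i, rfl⟩; exact hsub i
    have := stage_between h01 h12 hD.1 hD.2.2.1 hD.2.2.2.1 hrange hrange2
    rw [hD.2.2.2.2] at this
    omega
  set a : (Λ[cd.n, cd.i₀] : SSet.{0}).obj m :=
    ⟨(stdSimplex.objEquiv).symm (facHom cd σ hsub), hh⟩ with ha
  have h1 : L.app m ((stdSimplex.objEquiv).symm (facHom cd σ hsub)) =
      ((SSet.horn cd.n cd.i₀).ι ≫ L).app m a := rfl
  rw [cellVal, ← hcd, ← hL, h1, cellL_fac_left]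
  show t.app m ((hornMap hD cd).app m a) = t.app m ⟨σ, hold⟩
  apply congrArg
  apply Subtype.ext
  show (nerve S).map ((stdSimplex.objEquiv) a.1).op (cellSimp cd) = σ
  have : (stdSimplex.objEquiv) a.1 = facHom cd σ hsub := Equiv.apply_symm_apply _ _
  rw [this, facHom_spec]

/-- `p` maps the cell value to `b` of the simplex. -/
lemma cellVal_fac_right {D : Set S} (hD : IsBigAt x₀ x₁ x₂ D k)
    {m : SimplexCategoryᵒᵖ} (σ : (nerve S).obj m) (hsub : ∀ i, σ.obj i ∈ D)
    (hmem : σ ∈ (Z x₀ x₁ x₂ (k+1)).obj m) :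
    p.app m (cellVal h01 h12 hgreatest hleast p t b hcomm hp hD σ hsub) =
      b.app m ⟨σ, hmem⟩ := by
  set cd := mkBigCell h01 h12 hgreatest hleast hD with hcd
  set L := cellL p t b hcomm hp hD cd with hL
  have h1 : p.app m (L.app m ((stdSimplex.objEquiv).symm (facHom cd σ hsub))) =
      (L ≫ p).app m ((stdSimplex.objEquiv).symm (facHom cd σ hsub)) := rfl
  rw [cellVal, ← hcd, ← hL, h1, cellL_fac_right]
  show b.app m ((charB hD cd).app m _) = b.app m ⟨σ, hmem⟩
  apply congrArg
  apply Subtype.ext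
  simp only [charB]
  show (nerve S).map ((stdSimplex.objEquiv.{0}) ((stdSimplex.objEquiv.{0}).symm (facHom cd σ hsub))).op (cellSimp cd) = σ
  rw [Equiv.apply_symm_apply, facHom_spec]


-- ## The step lift

/-- The lift at step `k → k+1` of the filtration. -/
noncomputable def stepLift : (Z x₀ x₁ x₂ (k+1)).toFunctor ⟶ X where
  app m := TypeCat.ofHom fun σ =>
    if h : stage x₀ x₁ x₂ (Set.range σ.1.obj) ≤ k then t.app m ⟨σ.1, h⟩
    else stepVal h01 h12 hgreatest hleast p t b hcomm hp σ.1
      (Nat.le_antisymm σ.2 (Nat.succ_le_of_lt (Nat.lt_of_not_le h)))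
  naturality m m' φ := by
    ext σ
    have hsub : Set.range ((nerve S).map φ σ.1).obj ⊆ Set.range σ.1.obj := by
      rintro - ⟨i, rfl⟩
      exact ⟨φ.unop.toOrderHom i, rfl⟩
    have hmono := stage_mono (x₀ := x₀) (x₁ := x₁) (x₂ := x₂) hsub (Set.finite_range _)
    change (if h : stage x₀ x₁ x₂ (Set.range ((nerve S).map φ σ.1).obj) ≤ k then
        t.app m' ⟨(nerve S).map φ σ.1, h⟩
      else stepVal h01 h12 hgreatest hleast p t b hcomm hp ((nerve S).map φ σ.1) _) =
      X.map φ (if h : stage x₀ x₁ x₂ (Set.range σ.1.obj) ≤ k then t.app m ⟨σ.1, h⟩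
      else stepVal h01 h12 hgreatest hleast p t b hcomm hp σ.1 _)
    by_cases h : stage x₀ x₁ x₂ (Set.range σ.1.obj) ≤ k
    · have h' : stage x₀ x₁ x₂ (Set.range ((nerve S).map φ σ.1).obj) ≤ k := le_trans hmono h
      rw [dif_pos h, dif_pos h']
      exact types_congr_hom (t.naturality φ) ⟨σ.1, h⟩
    · have hst : stage x₀ x₁ x₂ (Set.range σ.1.obj) = k + 1 :=
        Nat.le_antisymm σ.2 (Nat.succ_le_of_lt (Nat.lt_of_not_le h))
      rw [dif_neg h]
      by_cases h' : stage x₀ x₁ x₂ (Set.range ((nerve S).map φ σ.1).obj) ≤ k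
      · rw [dif_pos h']
        rw [stepVal_eq_cellVal]
        rw [← cellVal_map h01 h12 hgreatest hleast p t b hcomm hp rfl
          (isBigAt_of_stage h01 h12 hgreatest hleast σ.1 hst)
          (isBigAt_of_stage h01 h12 hgreatest hleast σ.1 hst) φ σ.1
          (fun i => subset_big ⟨i, rfl⟩) (fun i => subset_big (hsub ⟨i, rfl⟩))]
        rw [cellVal_old h01 h12 hgreatest hleast p t b hcomm hp _ _ _ h']
      · rw [dif_neg h']
        have hst' : stage x₀ x₁ x₂ (Set.range ((nerve S).map φ σ.1).obj) = k + 1 :=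
          Nat.le_antisymm (le_trans hmono (le_of_eq hst)) (Nat.succ_le_of_lt (Nat.lt_of_not_le h'))
        rw [stepVal_eq_cellVal]
        have hbad' : Bad x₀ x₁ x₂ (Set.range ((nerve S).map φ σ.1).obj) :=
          bad_of_stage_ne_zero (by omega)
        have hbad : Bad x₀ x₁ x₂ (Set.range σ.1.obj) := bad_of_stage_ne_zero (by omega)
        have hDD : big x₀ x₂ (Set.range ((nerve S).map φ σ.1).obj) =
            big x₀ x₂ (Set.range σ.1.obj) :=
          big_eq_of_sub h01 h12 hbad' hbad hsub (Set.finite_range _) (by rw [hst', hst])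
        exact cellVal_map h01 h12 hgreatest hleast p t b hcomm hp hDD _ _ φ σ.1
          (fun i => subset_big ⟨i, rfl⟩) (fun i => subset_big ⟨i, rfl⟩)

end Step

lemma step_hasLiftingProperty (h01 : x₀ < x₁) (h12 : x₁ < x₂)
    (hgreatest : IsGreatest {r : S | r ≠ x₁ ∧ r ≤ x₁} x₀)
    (hleast : IsLeast {r : S | r ≠ x₁ ∧ x₁ ≤ r} x₂)
    {X Y : SSet} (p : X ⟶ Y) (hp : RLP InnerHornInclusions p)
    (k : ℕ) :
    HasLiftingProperty
      (Subfunctor.homOfLe (Z_le (x₀ := x₀) (x₁ := x₁) (x₂ := x₂) k)) p := by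
  constructor
  intro t b sq
  constructor
  constructor
  refine ⟨stepLift h01 h12 hgreatest hleast p t b sq.w hp, ?_, ?_⟩
  · apply NatTrans.ext
    funext m; ext σ
    change (if h : stage x₀ x₁ x₂ (Set.range σ.1.obj) ≤ k then t.app m ⟨σ.1, h⟩
      else stepVal h01 h12 hgreatest hleast p t b sq.w hp σ.1 _) = t.app m σ
    rw [dif_pos (show stage x₀ x₁ x₂ (Set.range σ.1.obj) ≤ k from σ.2)]
    rfl
  · apply NatTrans.ext
    funext m; ext σ
    change p.app m (if h : stage x₀ x₁ x₂ (Set.range σ.1.obj) ≤ k then t.app m ⟨σ.1, h⟩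
      else stepVal h01 h12 hgreatest hleast p t b sq.w hp σ.1 _) = b.app m σ
    by_cases h : stage x₀ x₁ x₂ (Set.range σ.1.obj) ≤ k
    · rw [dif_pos h]
      have := types_congr_hom (congrArg (fun (f : _ ⟶ Y) => f.app m) sq.w) ⟨σ.1, h⟩
      simp only [NatTrans.comp_app, types_comp_apply] at this
      exact this
    · rw [dif_neg h]
      rw [stepVal_eq_cellVal]
      exact cellVal_fac_right h01 h12 hgreatest hleast p t b sq.w hp _ σ.1 _ σ.2


-- ## Assembly along the filtration

section Assemble

variable (h01 : x₀ < x₁) (h12 : x₁ < x₂)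
  (hgreatest : IsGreatest {r : S | r ≠ x₁ ∧ r ≤ x₁} x₀)
  (hleast : IsLeast {r : S | r ≠ x₁ ∧ x₁ ≤ r} x₂)

include h01 h12 in
lemma U_eq_Z0 :
    nerveUnion S {({x₀, x₁, x₂} : Set S), {r : S | r ≠ x₁}} = Z x₀ x₁ x₂ 0 := by
  apply Subfunctor.ext
  funext m
  ext σ
  show (∃ T ∈ ({({x₀, x₁, x₂} : Set S), {r : S | r ≠ x₁}} : Set (Set S)), ∀ i, σ.obj i ∈ T) ↔
    stage x₀ x₁ x₂ (Set.range σ.obj) ≤ 0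
  constructor
  · rintro ⟨T, hT, hmem⟩
    have hnb : ¬ Bad x₀ x₁ x₂ (Set.range σ.obj) := by
      rcases hT with rfl | rfl
      · rintro ⟨-, hQ⟩
        exact hQ (by rintro - ⟨i, rfl⟩; exact hmem i)
      · rintro ⟨⟨i, hi⟩, -⟩
        exact hmem i hi
    rw [stage_of_not_bad hnb]
  · intro h
    have hnb : ¬ Bad x₀ x₁ x₂ (Set.range σ.obj) := by
      intro hb
      have := stage_pos_of_bad hb (Set.finite_range _)
      omega
    rw [Bad, not_and_or, not_not] at hnb
    rcases hnb with h1 | h1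
    · refine ⟨{r : S | r ≠ x₁}, Or.inr rfl, fun i => ?_⟩
      exact fun he => h1 (he ▸ ⟨i, rfl⟩)
    · exact ⟨{x₀, x₁, x₂}, Or.inl rfl, fun i => h1 ⟨i, rfl⟩⟩

variable {X Y : SSet} (p : X ⟶ Y) (hp : RLP InnerHornInclusions p)
  (f : (nerveUnion S {({x₀, x₁, x₂} : Set S), {r : S | r ≠ x₁}}).toFunctor ⟶ X)
  (g : nerve S ⟶ Y)
  (hfg : f ≫ p = (nerveUnion S {({x₀, x₁, x₂} : Set S), {r : S | r ≠ x₁}}).ι ≫ g)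

lemma seqSq {k : ℕ} (l : (Z x₀ x₁ x₂ k).toFunctor ⟶ X)
    (hl : l ≫ p = (Z x₀ x₁ x₂ k).ι ≫ g) :
    CommSq l (Subfunctor.homOfLe (Z_le (x₀ := x₀) (x₁ := x₁) (x₂ := x₂) k)) p
      ((Z x₀ x₁ x₂ (k+1)).ι ≫ g) :=
  ⟨by rw [hl, ← Subfunctor.homOfLe_ι (Z_le (x₀ := x₀) (x₁ := x₁) (x₂ := x₂) k),
    Category.assoc]⟩

/-- The inductively constructed partial lifts. -/
noncomputable def seq :
    ∀ k : ℕ, {l : (Z x₀ x₁ x₂ k).toFunctor ⟶ X // l ≫ p = (Z x₀ x₁ x₂ k).ι ≫ g}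
  | 0 => ⟨Subfunctor.homOfLe (le_of_eq (U_eq_Z0 h01 h12).symm) ≫ f, by
      rw [Category.assoc, hfg, ← Category.assoc, Subfunctor.homOfLe_ι]⟩
  | (k+1) =>
      letI := step_hasLiftingProperty h01 h12 hgreatest hleast p hp k
      letI := HasLiftingProperty.sq_hasLift
        (seqSq p g (seq k).1 (seq k).2)
      ⟨(seqSq p g (seq k).1 (seq k).2).lift,
        (seqSq p g (seq k).1 (seq k).2).fac_right⟩

lemma seq_compat (k : ℕ) :
    Subfunctor.homOfLe (Z_le (x₀ := x₀) (x₁ := x₁) (x₂ := x₂) k) ≫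
      (seq h01 h12 hgreatest hleast p hp f g hfg (k+1)).1 =
      (seq h01 h12 hgreatest hleast p hp f g hfg k).1 := by
  show Subfunctor.homOfLe _ ≫
    (letI := step_hasLiftingProperty h01 h12 hgreatest hleast p hp k
     letI := HasLiftingProperty.sq_hasLift
       (seqSq p g (seq h01 h12 hgreatest hleast p hp f g hfg k).1
         (seq h01 h12 hgreatest hleast p hp f g hfg k).2)
     (seqSq p g (seq h01 h12 hgreatest hleast p hp f g hfg k).1
       (seq h01 h12 hgreatest hleast p hp f g hfg k).2).lift) = _
  letI := step_hasLiftingProperty h01 h12 hgreatest hleast p hp k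
  letI := HasLiftingProperty.sq_hasLift
    (seqSq p g (seq h01 h12 hgreatest hleast p hp f g hfg k).1
      (seq h01 h12 hgreatest hleast p hp f g hfg k).2)
  exact (seqSq p g (seq h01 h12 hgreatest hleast p hp f g hfg k).1
    (seq h01 h12 hgreatest hleast p hp f g hfg k).2).fac_left

lemma seq_agree (k k' : ℕ) (hkk' : k ≤ k') {m : SimplexCategoryᵒᵖ}
    (σ : (nerve S).obj m) (hσ : σ ∈ (Z x₀ x₁ x₂ k).obj m) :
    (seq h01 h12 hgreatest hleast p hp f g hfg k').1.app m ⟨σ, le_trans hσ hkk'⟩ =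
      (seq h01 h12 hgreatest hleast p hp f g hfg k).1.app m ⟨σ, hσ⟩ := by
  induction k' , hkk' using Nat.le_induction with
  | base => rfl
  | succ k' hkk' ih =>
      have h1 := types_congr_hom (congrArg (fun (l : _ ⟶ X) => l.app m)
        (seq_compat h01 h12 hgreatest hleast p hp f g hfg k')) ⟨σ, le_trans hσ hkk'⟩
      simp only [NatTrans.comp_app, types_comp_apply] at h1
      rw [← ih]
      exact h1

lemma mem_Z_self {mm : SimplexCategoryᵒᵖ} (τ : (nerve S).obj mm) :
    τ ∈ (Z x₀ x₁ x₂ (stage x₀ x₁ x₂ (Set.range τ.obj))).obj mm := by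
  show stage x₀ x₁ x₂ (Set.range τ.obj) ≤ stage x₀ x₁ x₂ (Set.range τ.obj)
  exact le_rfl

/-- The total lift. -/
noncomputable def totalLift : nerve S ⟶ X where
  app m := TypeCat.ofHom fun σ => (seq h01 h12 hgreatest hleast p hp f g hfg
      (stage x₀ x₁ x₂ (Set.range σ.obj))).1.app m ⟨σ, mem_Z_self σ⟩
  naturality m m' φ := by
    ext σ
    have hsub : Set.range ((nerve S).map φ σ).obj ⊆ Set.range σ.obj := by
      rintro - ⟨i, rfl⟩
      exact ⟨φ.unop.toOrderHom i, rfl⟩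
    have hmono := stage_mono (x₀ := x₀) (x₁ := x₁) (x₂ := x₂) hsub (Set.finite_range _)
    exact ((seq_agree h01 h12 hgreatest hleast p hp f g hfg _ _ hmono ((nerve S).map φ σ)
        (mem_Z_self _)).symm).trans
      (types_congr_hom ((seq h01 h12 hgreatest hleast p hp f g hfg
        (stage x₀ x₁ x₂ (Set.range σ.obj))).1.naturality φ) ⟨σ, mem_Z_self σ⟩)

end Assemble

end IA


open IA in
/-- Let `S` be a poset containing a three-element chain `x₀ < x₁ < x₂` (a full
subposet `Q`), and let `R = S − {x₁}`.  If `x₀` is the greatest element of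
`{r ∈ R : r ≤ x₁}` and `x₂` is the least element of `{r ∈ R : x₁ ≤ r}`, then the
inclusion `N(Q) ∪ N(R) ⊆ N(S)` is inner anodyne. -/
theorem stmt14 (S : Type) [PartialOrder S] (x₀ x₁ x₂ : S)
    (h01 : x₀ < x₁) (h12 : x₁ < x₂)
    (hgreatest : IsGreatest {r : S | r ≠ x₁ ∧ r ≤ x₁} x₀)
    (hleast : IsLeast {r : S | r ≠ x₁ ∧ x₁ ≤ r} x₂) :
    InnerAnodyne (nerveUnion S {({x₀, x₁, x₂} : Set S), {r : S | r ≠ x₁}}).ι := by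

  intro X Y p hp
  constructor
  intro f g sq
  constructor
  constructor
  refine ⟨totalLift h01 h12 hgreatest hleast p hp f g sq.w, ?_, ?_⟩
  · apply NatTrans.ext
    funext m; ext σ
    have h0 : σ.1 ∈ (Z x₀ x₁ x₂ 0).obj m := by
      rw [← U_eq_Z0 h01 h12]
      exact σ.2
    show (seq h01 h12 hgreatest hleast p hp f g sq.w
        (stage x₀ x₁ x₂ (Set.range σ.1.obj))).1.app m ⟨σ.1, mem_Z_self σ.1⟩ = f.app m σ
    have ha := seq_agree h01 h12 hgreatest hleast p hp f g sq.w 0 _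
      (Nat.zero_le (stage x₀ x₁ x₂ (Set.range σ.1.obj))) σ.1 h0
    refine ha.trans ?_
    rfl
  · apply NatTrans.ext
    funext m; ext σ
    show p.app m ((seq h01 h12 hgreatest hleast p hp f g sq.w
        (stage x₀ x₁ x₂ (Set.range σ.obj))).1.app m ⟨σ, mem_Z_self σ⟩) = g.app m σ
    have := types_congr_hom (congrArg (fun (l : _ ⟶ Y) => l.app m)
      (seq h01 h12 hgreatest hleast p hp f g sq.w
        (stage x₀ x₁ x₂ (Set.range σ.obj))).2) ⟨σ, mem_Z_self σ⟩
    simp only [NatTrans.comp_app, types_comp_apply] at this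
    exact this
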